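/- Let n ≥ 1, T > 0, and let P : ℝ → M_n(ℝ) be continuous with P(t+T) = P(t), P(t) symmetric and positive definite for every t. Equip ℝⁿ with an arbitrary norm ‖·‖ and let ‖P(t)‖ be the induced operator norm. If there exists c > 0 such that ∫₀ᵀ max(c, c^{−1}·‖P(t)‖) dt < π, then the only twice continuously differentiable x : ℝ → ℝⁿ satisfying x''(t) + P(t)·x(t) = 0 and x(t+T) = −x(t) for all t is x ≡ 0. -/

import Mathlib

open scoped RealInnerProductSpace
open Set

/-- Euclidean operator bound from eigenvalue bound for a Hermitian real matrix. -/
lemma spec_bound {n : ℕ} {A : Matrix (Fin n) (Fin n) ℝ} (hA : A.IsHermitian) {ρ : ℝ}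
    (hρ0 : 0 ≤ ρ) (hρ : ∀ i, |hA.eigenvalues i| ≤ ρ) (w : EuclideanSpace ℝ (Fin n)) :
    ‖Matrix.toEuclideanLin A w‖ ≤ ρ * ‖w‖ := by
  classical
  set b := hA.eigenvectorBasis with hb
  have hS : (Matrix.toEuclideanLin A).IsSymmetric :=
    Matrix.isHermitian_iff_isSymmetric.mp hA
  have hTb : ∀ j, Matrix.toEuclideanLin A (b j) = hA.eigenvalues j • b j := by
    intro j
    have h := hA.mulVec_eigenvectorBasis j
    apply (WithLp.equiv 2 _).injective
    simp only [Matrix.toEuclideanLin_apply]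
    ext k
    have := congrFun h k
    simpa using this
  have key : ∀ i, b.repr (Matrix.toEuclideanLin A w) i = hA.eigenvalues i * b.repr w i := by
    intro i
    rw [b.repr_apply_apply, b.repr_apply_apply, ← hS (b i) w, hTb i, real_inner_smul_left]
  rw [← b.repr.norm_map w, ← b.repr.norm_map (Matrix.toEuclideanLin A w)]
  rw [EuclideanSpace.norm_eq, EuclideanSpace.norm_eq]
  rw [show ρ * Real.sqrt (∑ i, ‖b.repr w i‖ ^ 2)
      = Real.sqrt (ρ ^ 2 * ∑ i, ‖b.repr w i‖ ^ 2) by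
    rw [Real.sqrt_mul (by positivity), Real.sqrt_sq hρ0]]
  apply Real.sqrt_le_sqrt
  rw [Finset.mul_sum]
  apply Finset.sum_le_sum
  intro i _
  rw [key i]
  have h1 : |hA.eigenvalues i * b.repr w i| ≤ ρ * |b.repr w i| := by
    rw [abs_mul]
    exact mul_le_mul_of_nonneg_right (hρ i) (abs_nonneg _)
  calc ‖hA.eigenvalues i * b.repr w i‖ ^ 2 = |hA.eigenvalues i * b.repr w i| ^ 2 := by
        rw [Real.norm_eq_abs]
    _ ≤ (ρ * |b.repr w i|) ^ 2 := by
        apply pow_le_pow_left₀ (abs_nonneg _) h1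
    _ = ρ ^ 2 * ‖b.repr w i‖ ^ 2 := by rw [mul_pow, Real.norm_eq_abs]

/-- If a differentiable function is nonnegative on `[0, t₀)` and vanishes at `t₀ > 0`,
its derivative at `t₀` is nonpositive. -/
lemma deriv_nonpos_of_left_nonneg {h : ℝ → ℝ} {d t₀ : ℝ} (ht₀ : 0 < t₀)
    (hd : HasDerivAt h d t₀) (hnn : ∀ u ∈ Set.Ico (0:ℝ) t₀, 0 ≤ h u) (h0 : h t₀ = 0) :
    d ≤ 0 := by
  have hs := hasDerivAt_iff_tendsto_slope.mp hd
  have hs' : Filter.Tendsto (slope h t₀) (nhdsWithin t₀ (Set.Iio t₀)) (nhds d) :=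
    hs.mono_left (nhdsWithin_mono _ fun u hu => ne_of_lt hu)
  refine le_of_tendsto hs' ?_
  filter_upwards [Ioo_mem_nhdsLT ht₀] with u hu
  have hsl : slope h t₀ u = h u / (u - t₀) := by
    rw [slope_def_field, h0, sub_zero]
  rw [hsl]
  exact div_nonpos_of_nonneg_of_nonpos (hnn u ⟨le_of_lt hu.1, hu.2⟩) (by linarith [hu.2])

/-- Grönwall: a solution of a linear differential inequality vanishing at `a`
vanishes on `[a, b]`. -/
lemma zero_of_gronwall {F : Type*} [NormedAddCommGroup F] [NormedSpace ℝ F]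
    {y y' : ℝ → F} {K a b : ℝ}
    (hy : ∀ t, HasDerivAt y (y' t) t) (hb : ∀ u ∈ Set.Icc a b, ‖y' u‖ ≤ K * ‖y u‖)
    (ha : y a = 0) : ∀ t ∈ Set.Icc a b, y t = 0 := by
  intro t ht
  have hcont : ContinuousOn y (Set.Icc a b) :=
    (fun s _ => ((hy s).differentiableAt.continuousAt).continuousWithinAt)
  have key := norm_le_gronwallBound_of_norm_deriv_right_le (f := y) (f' := y')
    (δ := 0) (K := K) (ε := 0) hcont
    (fun s hs => (hy s).hasDerivWithinAt) (by simp [ha])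
    (fun s hs => by simpa using hb s ⟨hs.1, le_of_lt hs.2⟩)
  have := key t ht
  rw [gronwallBound_ε0] at this
  simp only [zero_mul] at this
  exact norm_le_zero_iff.mp this

lemma continuous_opfam {n : ℕ} {E : Type*} [NormedAddCommGroup E] [NormedSpace ℝ E]
    [FiniteDimensional ℝ E] (coords : E ≃ₗ[ℝ] (Fin n → ℝ)) :
    Continuous (fun A : Matrix (Fin n) (Fin n) ℝ => LinearMap.toContinuousLinearMap
      (coords.symm.toLinearMap ∘ₗ A.mulVecLin ∘ₗ coords.toLinearMap)) := by
  have hlin : IsLinearMap ℝ (fun A : Matrix (Fin n) (Fin n) ℝ => LinearMap.toContinuousLinearMap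
      (coords.symm.toLinearMap ∘ₗ A.mulVecLin ∘ₗ coords.toLinearMap)) := by
    constructor
    · intro A B
      ext z
      simp [Matrix.mulVecLin_add, LinearMap.add_comp, LinearMap.comp_add]
    · intro m A
      ext z
      simp [Matrix.add_mulVec, Matrix.smul_mulVec]
  exact LinearMap.continuous_of_finiteDimensional (IsLinearMap.mk' _ hlin)

lemma no_antiperiodic_aux {F : Type*} [NormedAddCommGroup F] [InnerProductSpace ℝ F]
    {y y' : ℝ → F} {M : ℝ → ℝ} {T : ℝ} (hT : 0 < T)
    (hy : ∀ t, HasDerivAt y (y' t) t)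
    (hbound : ∀ t, ‖y' t‖ ≤ M t * ‖y t‖)
    (hMc : Continuous M) (hMpos : ∀ t, 0 < M t)
    (hyT : y T = -(y 0)) (hy0 : ∀ t, y t ≠ 0)
    (hNM : (∫ t in (0:ℝ)..T, M t) < Real.pi) : False := by
  have hrpos : ∀ t, (0:ℝ) < ‖y t‖ := fun t => norm_pos_iff.mpr (hy0 t)
  -- derivative of the norm
  have hr : ∀ t, HasDerivAt (fun s => ‖y s‖) (⟪y' t, y t⟫ / ‖y t‖) t := by
    intro t
    have hipd : HasDerivAt (fun s => ⟪y s, y s⟫) (⟪y t, y' t⟫ + ⟪y' t, y t⟫) t :=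
      HasDerivAt.inner ℝ (hy t) (hy t)
    have hne : ⟪y t, y t⟫ ≠ 0 := by
      rw [real_inner_self_eq_norm_sq]
      exact (pow_pos (hrpos t) 2).ne'
    have hsq := hipd.sqrt hne
    have heqf : (fun s => Real.sqrt (⟪y s, y s⟫)) = fun s => ‖y s‖ := by
      funext s
      rw [real_inner_self_eq_norm_sq, Real.sqrt_sq (norm_nonneg _)]
    rw [heqf] at hsq
    convert hsq using 1
    rw [show Real.sqrt (⟪y t, y t⟫) = ‖y t‖ by
      rw [real_inner_self_eq_norm_sq, Real.sqrt_sq (norm_nonneg _)]]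
    rw [real_inner_comm (y t) (y' t)]
    field_simp [(hrpos t).ne']
    ring
  -- the angle cosine
  set f : ℝ → ℝ := fun t => ⟪y 0, y t⟫ / (‖y 0‖ * ‖y t‖) with hfdef
  have hinner : ∀ t, ⟪y 0, y t⟫ = f t * (‖y 0‖ * ‖y t‖) := by
    intro t
    simp only [hfdef]
    rw [div_mul_cancel₀ _ (mul_pos (hrpos 0) (hrpos t)).ne']
  have hf0 : f 0 = 1 := by
    simp only [hfdef]
    rw [real_inner_self_eq_norm_mul_norm]
    exact div_self (mul_pos (hrpos 0) (hrpos 0)).ne'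
  have hfT : f T = -1 := by
    simp only [hfdef]
    rw [hyT, inner_neg_right, norm_neg, real_inner_self_eq_norm_mul_norm, neg_div,
      div_self (mul_pos (hrpos 0) (hrpos 0)).ne']
  set D : ℝ → ℝ := fun t => (⟪y 0, y' t⟫ * (‖y 0‖ * ‖y t‖) -
      ⟪y 0, y t⟫ * (‖y 0‖ * (⟪y' t, y t⟫ / ‖y t‖))) / (‖y 0‖ * ‖y t‖)^2 with hDdef
  have hfd : ∀ t, HasDerivAt f (D t) t := by
    intro t
    have hu : HasDerivAt (fun s => ⟪y 0, y s⟫) (⟪y 0, y' t⟫) t := by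
      have := HasDerivAt.inner ℝ (hasDerivAt_const t (y 0)) (hy t)
      simpa using this
    have hv : HasDerivAt (fun s => ‖y 0‖ * ‖y s‖) (‖y 0‖ * (⟪y' t, y t⟫ / ‖y t‖)) t :=
      (hr t).const_mul (‖y 0‖)
    exact hu.div hv (mul_pos (hrpos 0) (hrpos t)).ne'
  have hfc : Continuous f :=
    continuous_iff_continuousAt.mpr fun t => (hfd t).differentiableAt.continuousAt
  -- the auxiliary unit-sphere vector
  set w : ℝ → F :=
    fun t => (‖y 0‖)⁻¹ • y 0 - f t • ((‖y t‖)⁻¹ • y t) with hwdef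
  have hD : ∀ t, D t = ⟪w t, y' t⟫ / ‖y t‖ := by
    intro t
    simp only [hDdef, hwdef, inner_sub_left, real_inner_smul_left, hinner t,
      real_inner_comm (y' t) (y t)]
    field_simp [(hrpos 0).ne', (hrpos t).ne']
  have hwnorm : ∀ t, ‖w t‖^2 = 1 - f t^2 := by
    intro t
    simp only [hwdef]
    rw [← real_inner_self_eq_norm_sq, real_inner_sub_sub_self]
    simp only [real_inner_smul_left, real_inner_smul_right]
    rw [hinner t, real_inner_self_eq_norm_mul_norm, real_inner_self_eq_norm_mul_norm]
    field_simp [(hrpos 0).ne', (hrpos t).ne']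
    ring
  have hDge : ∀ t, -(Real.sqrt (1 - f t ^ 2) * M t) ≤ D t := by
    intro t
    rw [hD t]
    have h2 : ‖w t‖ = Real.sqrt (1 - f t ^ 2) := by
      rw [← hwnorm t, Real.sqrt_sq (norm_nonneg _)]
    have h1 : -(‖w t‖ * ‖y' t‖) ≤ ⟪w t, y' t⟫ :=
      neg_le_of_abs_le (abs_real_inner_le_norm _ _)
    have h3 : ‖w t‖ * ‖y' t‖ ≤ ‖w t‖ * (M t * ‖y t‖) :=
      mul_le_mul_of_nonneg_left (hbound t) (norm_nonneg _)
    have h4 : -(‖w t‖ * (M t * ‖y t‖)) ≤ ⟪w t, y' t⟫ := by linarith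
    have h5 : -(‖w t‖ * (M t * ‖y t‖)) / ‖y t‖ ≤ ⟪w t, y' t⟫ / ‖y t‖ := by
      gcongr
    calc -(Real.sqrt (1 - f t ^ 2) * M t)
        = -(‖w t‖ * (M t * ‖y t‖)) / ‖y t‖ := by
          rw [h2]
          field_simp [(hrpos t).ne']
      _ ≤ ⟪w t, y' t⟫ / ‖y t‖ := h5
  -- the comparison angle
  set Itot := ∫ t in (0:ℝ)..T, M t with hItot
  have hIpos : 0 < Itot := by
    apply intervalIntegral.intervalIntegral_pos_of_pos_on (hMc.intervalIntegrable _ _)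
      (fun u _ => hMpos u) hT
  have hIπ : Itot < Real.pi := hNM
  set δ := (Real.pi - Itot)/(2*T) with hδdef
  have hδpos : 0 < δ := div_pos (by linarith) (by linarith)
  set ε := (Real.pi - Itot)/4 with hεdef
  have hεpos : 0 < ε := by
    rw [hεdef]
    linarith
  have hεπ : ε < Real.pi := by
    rw [hεdef]
    linarith [Real.pi_pos]
  set S : ℝ → ℝ := fun t => ε + δ*t + ∫ u in (0:ℝ)..t, M u with hSdef
  have hS' : ∀ t, HasDerivAt S (δ + M t) t := by
    intro t
    have h1 : HasDerivAt (fun t => ∫ u in (0:ℝ)..t, M u) (M t) t :=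
      intervalIntegral.integral_hasDerivAt_right (hMc.intervalIntegrable _ _)
        hMc.stronglyMeasurable.stronglyMeasurableAtFilter hMc.continuousAt
    have h2 : HasDerivAt (fun t => ε + δ * t) δ t := by
      simpa using ((hasDerivAt_id t).const_mul δ).const_add ε
    exact h2.add h1
  have hSc : Continuous S :=
    continuous_iff_continuousAt.mpr fun t => (hS' t).differentiableAt.continuousAt
  have hST : S T < Real.pi := by
    have hδT : δ * T = (Real.pi - Itot)/2 := by
      rw [hδdef]
      field_simp
    show ε + δ*T + Itot < Real.pi
    rw [hδT, hεdef]
    linarith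
  have hSmono : ∀ s t, s ≤ t → S s ≤ S t := by
    intro s t hst
    have h1 : (∫ u in (0:ℝ)..s, M u) + ∫ u in s..t, M u = ∫ u in (0:ℝ)..t, M u :=
      intervalIntegral.integral_add_adjacent_intervals (hMc.intervalIntegrable _ _)
        (hMc.intervalIntegrable _ _)
    have h2 : 0 ≤ ∫ u in s..t, M u :=
      intervalIntegral.integral_nonneg hst (fun u _ => (hMpos u).le)
    have h3 : δ * s ≤ δ * t := mul_le_mul_of_nonneg_left hst hδpos.le
    show ε + δ*s + _ ≤ ε + δ*t + _
    linarith
  have hSlow : ∀ t, 0 ≤ t → ε ≤ S t := by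
    intro t ht
    have h2 : 0 ≤ ∫ u in (0:ℝ)..t, M u :=
      intervalIntegral.integral_nonneg ht (fun u _ => (hMpos u).le)
    have h3 : 0 ≤ δ * t := mul_nonneg hδpos.le ht
    show ε ≤ ε + δ*t + _
    linarith
  set ψ : ℝ → ℝ := fun t => Real.cos (S t) with hψdef
  have hψ' : ∀ t, HasDerivAt ψ (-Real.sin (S t) * (δ + M t)) t := fun t => (hS' t).cos
  have hψc : Continuous ψ := Real.continuous_cos.comp hSc
  -- first crossing
  set Z := Icc (0:ℝ) T ∩ {t | f t ≤ ψ t} with hZdef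
  have hZclosed : IsClosed Z := isClosed_Icc.inter (isClosed_le hfc hψc)
  have hTZ : T ∈ Z := by
    constructor
    · exact ⟨hT.le, le_refl T⟩
    · show f T ≤ ψ T
      rw [hfT]
      exact Real.neg_one_le_cos (S T)
  have hbdd : BddBelow Z := ⟨0, fun z hz => hz.1.1⟩
  set t₀ := sInf Z with ht₀def
  have ht₀Z : t₀ ∈ Z := hZclosed.csInf_mem ⟨T, hTZ⟩ hbdd
  have hf0ψ : ψ 0 < f 0 := by
    rw [hf0]
    have hS0 : S 0 = ε := by
      show ε + δ*0 + _ = ε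
      rw [intervalIntegral.integral_same]
      ring
    show Real.cos (S 0) < 1
    rw [hS0]
    have h1 := Real.cos_lt_cos_of_nonneg_of_le_pi (le_refl 0) hεπ.le hεpos
    rwa [Real.cos_zero] at h1
  have ht₀pos : 0 < t₀ := by
    rcases eq_or_lt_of_le ht₀Z.1.1 with h | h
    · exfalso
      have := ht₀Z.2
      rw [← h] at this
      exact absurd this (not_le.mpr hf0ψ)
    · exact h
  have hlt : ∀ u ∈ Ico (0:ℝ) t₀, ψ u < f u := by
    intro u hu
    by_contra hcon
    push_neg at hcon
    have huZ : u ∈ Z := ⟨⟨hu.1, le_trans hu.2.le ht₀Z.1.2⟩, hcon⟩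
    have := csInf_le hbdd huZ
    linarith [hu.2]
  have heq : f t₀ = ψ t₀ := by
    refine le_antisymm ht₀Z.2 ?_
    have htend : Filter.Tendsto (fun u => f u - ψ u) (nhdsWithin t₀ (Iio t₀))
        (nhds (f t₀ - ψ t₀)) :=
      ((hfc.sub hψc).continuousAt).continuousWithinAt
    have hge : 0 ≤ f t₀ - ψ t₀ := by
      refine ge_of_tendsto htend ?_
      filter_upwards [Ioo_mem_nhdsLT ht₀pos] with u hu
      exact (sub_nonneg.mpr (hlt u ⟨hu.1.le, hu.2⟩).le)
    linarith
  -- derivative comparison at the crossing point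
  have hSt₀1 : 0 < S t₀ := lt_of_lt_of_le hεpos (hSlow t₀ ht₀Z.1.1)
  have hSt₀2 : S t₀ < Real.pi := lt_of_le_of_lt (hSmono t₀ T ht₀Z.1.2) hST
  have hsin : 0 < Real.sin (S t₀) := Real.sin_pos_of_pos_of_lt_pi hSt₀1 hSt₀2
  have hd : HasDerivAt (fun u => f u - ψ u)
      (D t₀ - (-Real.sin (S t₀) * (δ + M t₀))) t₀ := (hfd t₀).sub (hψ' t₀)
  have hd0 : D t₀ - (-Real.sin (S t₀) * (δ + M t₀)) ≤ 0 := by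
    apply deriv_nonpos_of_left_nonneg ht₀pos hd
    · intro u hu
      exact (sub_nonneg.mpr (hlt u hu).le)
    · rw [heq]
      ring
  have h1f : 1 - f t₀^2 = Real.sin (S t₀)^2 := by
    rw [heq]
    show 1 - Real.cos (S t₀)^2 = _
    rw [Real.sin_sq]
  have hkey := hDge t₀
  rw [h1f, Real.sqrt_sq hsin.le] at hkey
  have hmul : 0 < Real.sin (S t₀) * δ := mul_pos hsin hδpos
  nlinarith [hd0, hkey, hmul]

theorem second_order_no_antiperiodic_solution
    (n : ℕ) (hn : 1 ≤ n) {E : Type*} [NormedAddCommGroup E] [NormedSpace ℝ E]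
    [FiniteDimensional ℝ E]
    (coords : E ≃ₗ[ℝ] (Fin n → ℝ))
    (T : ℝ) (hT : 0 < T)
    (P : ℝ → Matrix (Fin n) (Fin n) ℝ)
    (hPcont : Continuous P)
    (hPper : ∀ t, P (t + T) = P t)
    (hPsymm : ∀ t, (P t).IsSymm)
    (hPpos : ∀ t, (P t).PosDef)
    (c : ℝ) (hc : 0 < c)
    (hN : (∫ t in (0:ℝ)..T,
        max c (c⁻¹ * ‖LinearMap.toContinuousLinearMap
          (coords.symm.toLinearMap ∘ₗ (P t).mulVecLin ∘ₗ coords.toLinearMap)‖)) < Real.pi)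
    (x : ℝ → E) (hxsm : ContDiff ℝ 2 x)
    (hx : ∀ t, iteratedDeriv 2 x t + coords.symm ((P t).mulVec (coords (x t))) = 0)
    (hanti : ∀ t, x (t + T) = -x t) :
    ∀ t, x t = 0 := by
  classical
  -- the operator family and the majorant
  set opP : ℝ → (E →L[ℝ] E) := fun t => LinearMap.toContinuousLinearMap
      (coords.symm.toLinearMap ∘ₗ (P t).mulVecLin ∘ₗ coords.toLinearMap) with hopP
  set M : ℝ → ℝ := fun t => max c (c⁻¹ * ‖opP t‖) with hM
  have hNM : (∫ t in (0:ℝ)..T, M t) < Real.pi := hN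
  -- continuity of the majorant
  have hopPc : Continuous opP := by
    exact (continuous_opfam coords).comp hPcont
  have hMc : Continuous M := by
    apply continuous_const.max (continuous_const.mul hopPc.norm)
  have hMpos : ∀ t, 0 < M t := fun t => lt_of_lt_of_le hc (le_max_left _ _)
  -- spectral bound
  have hPw : ∀ t (w : EuclideanSpace ℝ (Fin n)),
      ‖Matrix.toEuclideanLin (P t) w‖ ≤ ‖opP t‖ * ‖w‖ := by
    intro t w
    apply spec_bound (hPpos t).1 (norm_nonneg _) ?_ w
    intro i
    rw [abs_of_pos ((hPpos t).eigenvalues_pos i)]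
    set v : Fin n → ℝ := ⇑((hPpos t).1.eigenvectorBasis i) with hvdef
    have hv : (P t).mulVec v = (hPpos t).1.eigenvalues i • v :=
      (hPpos t).1.mulVec_eigenvectorBasis i
    have hvne : v ≠ 0 := by
      intro h0
      apply (hPpos t).1.eigenvectorBasis.orthonormal.ne_zero i
      apply (WithLp.equiv 2 _).injective
      ext k
      simpa using congrFun h0 k
    set z := coords.symm v with hz
    have hzne : z ≠ 0 := by
      intro h0
      apply hvne
      have h1 := congrArg coords h0
      rw [hz, LinearEquiv.apply_symm_apply, map_zero] at h1
      exact h1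
    have happ : opP t z = (hPpos t).1.eigenvalues i • z := by
      rw [hopP]
      simp only [LinearMap.coe_toContinuousLinearMap', LinearMap.comp_apply,
        LinearEquiv.coe_coe, Matrix.mulVecLin_apply, hz,
        LinearEquiv.apply_symm_apply, hv, map_smul]
    have hle := (opP t).le_opNorm z
    rw [happ, norm_smul, Real.norm_eq_abs,
      abs_of_pos ((hPpos t).eigenvalues_pos i)] at hle
    have hzpos : 0 < ‖z‖ := norm_pos_iff.mpr hzne
    exact le_of_mul_le_mul_right hle hzpos
  -- differentiability bookkeeping
  have hdiff1 : Differentiable ℝ x := hxsm.differentiable (by norm_num)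
  have hdiff2 : Differentiable ℝ (deriv x) := by
    have h := hxsm.differentiable_iteratedDeriv 1 (by norm_num)
    rwa [iteratedDeriv_one] at h
  have hx'' : ∀ t, deriv (deriv x) t = -(coords.symm ((P t).mulVec (coords (x t)))) := by
    intro t
    have h := hx t
    rw [show iteratedDeriv 2 x = deriv (deriv x) by
      rw [iteratedDeriv_succ, iteratedDeriv_one]] at h
    exact eq_neg_of_add_eq_zero_left h
  -- phase space
  let G := EuclideanSpace ℝ (Fin n)
  let φ : E ≃L[ℝ] G :=
    (coords.trans (WithLp.linearEquiv 2 ℝ (Fin n → ℝ)).symm).toContinuousLinearEquiv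
  let L : (G × G) ≃L[ℝ] WithLp 2 (G × G) := (WithLp.prodContinuousLinearEquiv 2 ℝ G G).symm
  let y : ℝ → WithLp 2 (G × G) := fun t => L (c • φ (x t), φ (deriv x t))
  let y' : ℝ → WithLp 2 (G × G) := fun t => L (c • φ (deriv x t), φ (deriv (deriv x) t))
  have hCS : ContinuousSMul ℝ (WithLp 2 (G × G)) := inferInstance
  have hy : ∀ t, HasDerivAt y (y' t) t := by
    intro t
    have hx1 : HasDerivAt (fun s => φ (x s)) (φ (deriv x t)) t :=
      φ.toContinuousLinearMap.hasFDerivAt.comp_hasDerivAt t (hdiff1 t).hasDerivAt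
    have hx2 : HasDerivAt (fun s => φ (deriv x s)) (φ (deriv (deriv x) t)) t :=
      φ.toContinuousLinearMap.hasFDerivAt.comp_hasDerivAt t (hdiff2 t).hasDerivAt
    have hpair : HasDerivAt (fun s => (c • φ (x s), φ (deriv x s)))
        (c • φ (deriv x t), φ (deriv (deriv x) t)) t :=
      (hx1.const_smul c).prodMk hx2
    exact L.toContinuousLinearMap.hasFDerivAt.comp_hasDerivAt t hpair
  have hbound : ∀ t, ‖y' t‖ ≤ M t * ‖y t‖ := by
    intro t
    have hyn : ‖y t‖^2 = ‖c • φ (x t)‖^2 + ‖φ (deriv x t)‖^2 := by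
      rw [WithLp.prod_norm_sq_eq_of_L2]
      rfl
    have hy'n : ‖y' t‖^2 = ‖c • φ (deriv x t)‖^2 + ‖φ (deriv (deriv x) t)‖^2 := by
      rw [WithLp.prod_norm_sq_eq_of_L2]
      rfl
    have hsec : φ (deriv (deriv x) t) = -(Matrix.toEuclideanLin (P t) (φ (x t))) := by
      rw [hx'' t, map_neg]
      congr 1
      rw [Matrix.toEuclideanLin_apply]
      rw [show (φ (x t)).ofLp = coords (x t) from rfl]
      show (WithLp.linearEquiv 2 ℝ (Fin n → ℝ)).symm (coords (coords.symm _)) = _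
      rw [LinearEquiv.apply_symm_apply]
      rfl
    have hsb : ‖φ (deriv (deriv x) t)‖ ≤ (c⁻¹ * ‖opP t‖) * ‖c • φ (x t)‖ := by
      rw [hsec, norm_neg]
      calc ‖Matrix.toEuclideanLin (P t) (φ (x t))‖ ≤ ‖opP t‖ * ‖φ (x t)‖ := hPw t _
        _ = (c⁻¹ * ‖opP t‖) * ‖c • φ (x t)‖ := by
            rw [norm_smul, Real.norm_eq_abs, abs_of_pos hc]
            field_simp
    have hm1 : c ≤ M t := le_max_left _ _
    have hm2 : c⁻¹ * ‖opP t‖ ≤ M t := le_max_right _ _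
    have hfb : ‖c • φ (deriv x t)‖ ≤ M t * ‖φ (deriv x t)‖ := by
      rw [norm_smul, Real.norm_eq_abs, abs_of_pos hc]
      exact mul_le_mul_of_nonneg_right hm1 (norm_nonneg _)
    have hsb' : ‖φ (deriv (deriv x) t)‖ ≤ M t * ‖c • φ (x t)‖ :=
      le_trans hsb (mul_le_mul_of_nonneg_right hm2 (norm_nonneg _))
    have hfin : ‖y' t‖^2 ≤ (M t * ‖y t‖)^2 := by
      rw [hy'n, mul_pow, hyn]
      nlinarith [norm_nonneg (c • φ (deriv x t)), norm_nonneg (φ (deriv (deriv x) t)),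
        norm_nonneg (c • φ (x t)), norm_nonneg (φ (deriv x t)), (hMpos t).le, hfb, hsb']
    calc ‖y' t‖ = Real.sqrt (‖y' t‖^2) := (Real.sqrt_sq (norm_nonneg _)).symm
      _ ≤ Real.sqrt ((M t * ‖y t‖)^2) := Real.sqrt_le_sqrt hfin
      _ = M t * ‖y t‖ := Real.sqrt_sq (mul_nonneg (hMpos t).le (norm_nonneg _))
  have hder : ∀ t, deriv x (t + T) = -deriv x t := by
    intro t
    have h1 : HasDerivAt (fun s => x (s + T)) ((1:ℝ) • deriv x (t + T)) t :=
      (hdiff1 (t + T)).hasDerivAt.scomp t ((hasDerivAt_id t).add_const T)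
    have h2 : HasDerivAt (fun s => x (s + T)) (-deriv x t) t := by
      have h3 : (fun s => x (s + T)) = fun s => -x s := funext hanti
      rw [h3]
      exact (hdiff1 t).hasDerivAt.neg
    have := h1.unique h2
    rwa [one_smul] at this
  have hxT : x T = -(x 0) := by
    have := hanti 0
    rwa [zero_add] at this
  have hdT : deriv x T = -(deriv x 0) := by
    have := hder 0
    rwa [zero_add] at this
  have hyT : y T = -(y 0) := by
    show L (c • φ (x T), φ (deriv x T)) = -(L (c • φ (x 0), φ (deriv x 0)))
    rw [hxT, hdT, map_neg φ, map_neg φ, smul_neg, ← map_neg L]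
    rfl
  have hxy : ∀ t, y t = 0 → x t = 0 := by
    intro t h0
    have h1 : (c • φ (x t), φ (deriv x t)) = 0 := by
      apply L.injective
      rw [map_zero]
      exact h0
    have h2 : c • φ (x t) = 0 := congrArg Prod.fst h1
    have h3 : φ (x t) = 0 := by
      rcases smul_eq_zero.mp h2 with h | h
      · exact absurd h hc.ne'
      · exact h
    apply φ.injective
    rw [map_zero]
    exact h3
  by_cases hy0 : ∃ t₀, y t₀ = 0
  · -- Grönwall case
    obtain ⟨t₀, ht₀⟩ := hy0
    intro s
    apply hxy s
    rcases le_or_gt t₀ s with hcase | hcase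
    · obtain ⟨u₀, -, hu₀⟩ := isCompact_Icc.exists_isMaxOn (Set.nonempty_Icc.mpr hcase)
        hMc.continuousOn
      refine zero_of_gronwall (K := M u₀) hy (fun u hu => ?_) ht₀ s ⟨hcase, le_refl s⟩
      exact le_trans (hbound u)
        (mul_le_mul_of_nonneg_right (hu₀ hu) (norm_nonneg _))
    · have hle : t₀ ≤ 2*t₀ - s := by linarith
      obtain ⟨u₀, -, hu₀⟩ := isCompact_Icc.exists_isMaxOn
        (Set.nonempty_Icc.mpr (le_of_lt hcase) : (Set.Icc s t₀).Nonempty) hMc.continuousOn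
      have hz : ∀ u, HasDerivAt (fun v => y (2*t₀ - v)) ((-1 : ℝ) • y' (2*t₀ - u)) u := by
        intro u
        exact (hy (2*t₀ - u)).scomp u ((hasDerivAt_id u).const_sub (2*t₀))
      have hz0 : y (2*t₀ - t₀) = 0 := by
        rw [show 2*t₀ - t₀ = t₀ by ring]
        exact ht₀
      have hres := zero_of_gronwall (y := fun v => y (2*t₀ - v))
        (y' := fun u => (-1 : ℝ) • y' (2*t₀ - u)) (K := M u₀) (a := t₀) (b := 2*t₀ - s)
        hz ?_ hz0 (2*t₀ - s) ⟨hle, le_refl _⟩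
      · rw [show s = 2*t₀ - (2*t₀ - s) by ring]
        exact hres
      · intro u hu
        rw [norm_smul]
        simp only [norm_neg, norm_one, one_mul]
        refine le_trans (hbound (2*t₀ - u)) ?_
        have : 2*t₀ - u ∈ Set.Icc s t₀ := ⟨by linarith [hu.2], by linarith [hu.1]⟩
        exact mul_le_mul_of_nonneg_right (hu₀ this) (norm_nonneg _)
  · -- contradiction case
    exfalso
    push_neg at hy0
    exact no_antiperiodic_aux hT hy hbound hMc hMpos hyT hy0 hNM
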